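/- Let d ≥ 1, let Q₀ be a fixed real d×d matrix with all row sums zero, let μ : ℝ → ℝ be continuous, and let q : ℝ → ℝ^d be continuous with q_1(t) + ⋯ + q_d(t) = 0 for all t. Set Q(t) := μ(t)·Q₀ + C_{q(t)} and u(t) := ∫₀ᵗ μ(τ)dτ. Define the Peano–Baker terms I_0(t) := I (identity) and I_{n+1}(t) := ∫₀ᵗ I_n(τ)·Q(τ) dτ, and the vectors q^{(1)}(t) := ∫₀ᵗ q(τ)dτ and q^{(n+1)}(t) := ∫₀ᵗ μ(τ)·q^{(n)}(τ) dτ. Then for every n ≥ 1 and every t ≥ 0: I_n(t) = (u(t)ⁿ/n!)·Q₀ⁿ + C_{q^{(n)}(t)}·Q₀^{n−1}, and moreover q^{(n)}(t) has entry sum zero, so C_{q^{(n)}(t)}·Q₀^{n−1} is a traceless equal-rows matrix. -/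

import Mathlib

open Matrix

/-- `eqRows d x` is the `d × d` real matrix all of whose rows equal the row vector `x`. -/
def eqRows (d : ℕ) (x : Fin d → ℝ) : Matrix (Fin d) (Fin d) ℝ :=
  Matrix.of fun _ j => x j

/-- for `Q(t) = μ(t)·Q₀ + C_{q(t)}` with `Q₀` of zero row sums, `μ` continuous,
and `q` continuous with entry sum zero, the Peano–Baker terms `I₀ = I`,
`I_{n+1}(t) = ∫₀ᵗ I_n(τ)·Q(τ) dτ` satisfy, for `n ≥ 1` and `t ≥ 0`,
`I_n(t) = (u(t)ⁿ/n!)·Q₀ⁿ + C_{q⁽ⁿ⁾(t)}·Q₀^{n−1}` with `u(t) = ∫₀ᵗ μ`,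
`q⁽¹⁾(t) = ∫₀ᵗ q(τ)dτ`, `q⁽ⁿ⁺¹⁾(t) = ∫₀ᵗ μ(τ)·q⁽ⁿ⁾(τ)dτ`; moreover `q⁽ⁿ⁾(t)` has entry sum
zero, so the second summand is a traceless equal-rows matrix. -/
theorem stmt13 (d : ℕ) (hd : 1 ≤ d) (Q0 : Matrix (Fin d) (Fin d) ℝ)
    (hQ0 : ∀ i, ∑ j, Q0 i j = 0)
    (μ : ℝ → ℝ) (hμ : Continuous μ)
    (q : ℝ → Fin d → ℝ) (hq : Continuous q) (hq0 : ∀ t, ∑ i, q t i = 0)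
    (I : ℕ → ℝ → Matrix (Fin d) (Fin d) ℝ)
    (hI0 : ∀ t, I 0 t = 1)
    (hIrec : ∀ n t, I (n + 1) t =
      Matrix.of fun i j => ∫ τ in (0:ℝ)..t, (I n τ * (μ τ • Q0 + eqRows d (q τ))) i j)
    (qit : ℕ → ℝ → Fin d → ℝ)
    (hq1 : ∀ t, qit 1 t = ∫ τ in (0:ℝ)..t, q τ)
    (hqrec : ∀ n, 1 ≤ n → ∀ t, qit (n + 1) t = ∫ τ in (0:ℝ)..t, μ τ • qit n τ)
    (n : ℕ) (hn : 1 ≤ n) (t : ℝ) (ht : 0 ≤ t) :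
    I n t = ((∫ τ in (0:ℝ)..t, μ τ) ^ n / n.factorial) • Q0 ^ n
        + eqRows d (qit n t) * Q0 ^ (n - 1) ∧
    (∑ i, qit n t i) = 0 ∧
    ∃ c : Fin d → ℝ, (∑ i, c i) = 0 ∧ eqRows d (qit n t) * Q0 ^ (n - 1) = eqRows d c := by
  have hμint : ∀ a b : ℝ, IntervalIntegrable μ MeasureTheory.volume a b :=
    fun a b => hμ.intervalIntegrable a b
  set u : ℝ → ℝ := fun s => ∫ τ in (0:ℝ)..s, μ τ with hudef
  have hu : ∀ s, HasDerivAt u (μ s) s := fun s =>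
    intervalIntegral.integral_hasDerivAt_right (hμint 0 s)
      hμ.aestronglyMeasurable.stronglyMeasurableAtFilter hμ.continuousAt
  have hucont : Continuous u := intervalIntegral.continuous_primitive hμint 0
  have hu0 : u 0 = 0 := intervalIntegral.integral_same
  -- row sums of positive powers of Q0 vanish
  have hpow : ∀ m (i : Fin d), ∑ j, (Q0 ^ (m + 1)) i j = 0 := by
    intro m i
    rw [pow_succ]
    simp only [Matrix.mul_apply]
    rw [Finset.sum_comm]
    simp [← Finset.mul_sum, hQ0]
  -- weighted row sums
  have hvm : ∀ (p : ℕ) (v : Fin d → ℝ), (∑ i, v i) = 0 →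
      ∑ j, ∑ k, v k * (Q0 ^ p) k j = 0 := by
    intro p v hv
    rw [Finset.sum_comm]
    simp only [← Finset.mul_sum]
    cases p with
    | zero => simpa [Matrix.one_apply] using hv
    | succ p => simp [hpow p]
  -- eqRows multiplication
  have heq_mul : ∀ (c : Fin d → ℝ) (M : Matrix (Fin d) (Fin d) ℝ),
      eqRows d c * M = eqRows d (fun j => ∑ k, c k * M k j) := by
    intro c M
    ext i j
    simp [eqRows, Matrix.mul_apply]
  -- matrix with zero row sums times eqRows is zero
  have hmul_eq : ∀ (M : Matrix (Fin d) (Fin d) ℝ), (∀ i, ∑ k, M i k = 0) →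
      ∀ c : Fin d → ℝ, M * eqRows d c = 0 := by
    intro M hM c
    ext i j
    simp [eqRows, Matrix.mul_apply, ← Finset.sum_mul, hM]
  -- eqRows v * Q0^p * eqRows w = 0 when v has zero sum
  have hEME : ∀ (p : ℕ) (v w : Fin d → ℝ), (∑ i, v i) = 0 →
      eqRows d v * Q0 ^ p * eqRows d w = 0 := by
    intro p v w hv
    rw [heq_mul v (Q0 ^ p)]
    ext i j
    simp only [eqRows, Matrix.mul_apply, Matrix.of_apply, Matrix.zero_apply]
    rw [← Finset.sum_mul, hvm p v hv, zero_mul]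
  -- key integral : ∫ u^m μ = u^(m+1)/(m+1)
  have hkey : ∀ (m : ℕ) (s : ℝ), (∫ τ in (0:ℝ)..s, u τ ^ m * μ τ) = u s ^ (m + 1) / (m + 1) := by
    intro m s
    have hder : ∀ x ∈ Set.uIcc (0:ℝ) s,
        HasDerivAt (fun x => u x ^ (m + 1) / (m + 1)) (u x ^ m * μ x) x := by
      intro x _
      have h1 : HasDerivAt (fun x => u x ^ (m + 1))
          ((m + 1 : ℕ) * u x ^ m * μ x) x := by
        simpa using (hu x).fun_pow (m + 1)
      have h2 := h1.div_const ((m : ℝ) + 1)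
      refine h2.congr_deriv ?_
      push_cast
      field_simp
    have hint : IntervalIntegrable (fun x => u x ^ m * μ x) MeasureTheory.volume 0 s :=
      ((hucont.pow m).mul hμ).intervalIntegrable 0 s
    rw [intervalIntegral.integral_eq_sub_of_hasDerivAt hder hint]
    simp [hu0]
  -- main induction
  have main : ∀ n, 1 ≤ n → Continuous (fun s => qit n s) ∧
      (∀ s, (∑ i, qit n s i) = 0) ∧
      (∀ s, I n s = (u s ^ n / n.factorial) • Q0 ^ n
        + eqRows d (qit n s) * Q0 ^ (n - 1)) := by
    intro n hn
    induction n, hn using Nat.le_induction with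
    | base =>
      have hqint : ∀ a b : ℝ, IntervalIntegrable q MeasureTheory.volume a b :=
        fun a b => hq.intervalIntegrable a b
      have happ : ∀ (s : ℝ) (i : Fin d), qit 1 s i = ∫ τ in (0:ℝ)..s, q τ i := by
        intro s i
        rw [hq1 s]
        have := ContinuousLinearMap.intervalIntegral_comp_comm
          (ContinuousLinearMap.proj i : (Fin d → ℝ) →L[ℝ] ℝ) (hqint 0 s)
        simpa using this.symm
      refine ⟨?_, ?_, ?_⟩
      · have : (fun s => qit 1 s) = fun s => ∫ τ in (0:ℝ)..s, q τ := funext hq1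
        rw [this]
        exact intervalIntegral.continuous_primitive hqint 0
      · intro s
        simp only [happ]
        rw [← intervalIntegral.integral_finset_sum]
        · simp [hq0]
        · intro i _
          exact ((continuous_apply i).comp hq).intervalIntegrable 0 s
      · intro s
        rw [hIrec 0 s]
        ext i j
        have hfun : ∀ τ, (I 0 τ * (μ τ • Q0 + eqRows d (q τ))) i j
            = Q0 i j * μ τ + q τ j := by
          intro τ
          simp [hI0, eqRows, mul_comm]
        simp only [Matrix.of_apply, hfun]
        have i1 : IntervalIntegrable (fun τ => Q0 i j * μ τ) MeasureTheory.volume 0 s :=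
          (continuous_const.mul hμ).intervalIntegrable 0 s
        have i2 : IntervalIntegrable (fun τ => q τ j) MeasureTheory.volume 0 s :=
          ((continuous_apply j).comp hq).intervalIntegrable 0 s
        rw [intervalIntegral.integral_add i1 i2, intervalIntegral.integral_const_mul]
        simp [Matrix.add_apply, Matrix.smul_apply, eqRows, happ, mul_comm, hudef]
    | succ n hn ih =>
      obtain ⟨hc, hs, hI⟩ := ih
      obtain ⟨m, rfl⟩ : ∃ m, n = m + 1 := ⟨n - 1, (Nat.succ_pred_eq_of_pos hn).symm⟩
      have hqcont : Continuous (fun τ => μ τ • qit (m + 1) τ) := hμ.smul hc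
      have hqint : ∀ a b : ℝ,
          IntervalIntegrable (fun τ => μ τ • qit (m + 1) τ) MeasureTheory.volume a b :=
        fun a b => hqcont.intervalIntegrable a b
      have happ : ∀ (s : ℝ) (i : Fin d),
          qit (m + 2) s i = ∫ τ in (0:ℝ)..s, μ τ * qit (m + 1) τ i := by
        intro s i
        rw [hqrec (m + 1) hn s]
        have := ContinuousLinearMap.intervalIntegral_comp_comm
          (ContinuousLinearMap.proj i : (Fin d → ℝ) →L[ℝ] ℝ) (hqint 0 s)
        simpa [smul_eq_mul] using this.symm
      have hcomp : ∀ k : Fin d, Continuous (fun τ => μ τ * qit (m + 1) τ k) :=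
        fun k => hμ.mul ((continuous_apply k).comp hc)
      refine ⟨?_, ?_, ?_⟩
      · have : (fun s => qit (m + 2) s) = fun s => ∫ τ in (0:ℝ)..s, μ τ • qit (m + 1) τ :=
          funext (hqrec (m + 1) hn)
        rw [this]
        exact intervalIntegral.continuous_primitive hqint 0
      · intro s
        simp only [happ]
        rw [← intervalIntegral.integral_finset_sum
          (fun k _ => (hcomp k).intervalIntegrable 0 s)]
        have : ∀ τ, (∑ k, μ τ * qit (m + 1) τ k) = 0 := by
          intro τ
          rw [← Finset.mul_sum, hs τ, mul_zero]
        simp [this]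
      · intro s
        -- matrix identity for the integrand
        have hmat : ∀ τ, I (m + 1) τ * (μ τ • Q0 + eqRows d (q τ))
            = ((u τ ^ (m + 1) / (m + 1).factorial) * μ τ) • Q0 ^ (m + 2)
              + μ τ • (eqRows d (qit (m + 1) τ) * Q0 ^ (m + 1)) := by
          intro τ
          rw [hI τ]
          have e1 : eqRows d (qit (m + 1) τ) * Q0 ^ (m + 1 - 1) * eqRows d (q τ) = 0 :=
            hEME m _ _ (hs τ)
          have e2 : Q0 ^ (m + 1) * eqRows d (q τ) = 0 := hmul_eq _ (hpow m) _
          simp only [Nat.add_sub_cancel] at e1 ⊢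
          rw [add_mul, mul_add, mul_add, smul_mul_assoc, smul_mul_assoc, e2, e1,
            mul_smul_comm, mul_smul_comm, smul_smul, smul_zero, add_zero, add_zero,
            ← pow_succ, mul_assoc, ← pow_succ]
        rw [hIrec (m + 1) s]
        ext i j
        have hfun : ∀ τ, (I (m + 1) τ * (μ τ • Q0 + eqRows d (q τ))) i j
            = (u τ ^ (m + 1) * μ τ) * ((Q0 ^ (m + 2)) i j / (m + 1).factorial)
              + ∑ k, (μ τ * qit (m + 1) τ k) * (Q0 ^ (m + 1)) k j := by
          intro τ
          rw [hmat τ]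
          simp only [Matrix.add_apply, Matrix.smul_apply, smul_eq_mul, eqRows,
            Matrix.mul_apply, Matrix.of_apply]
          rw [Finset.mul_sum]
          congr 1
          · ring
          · exact Finset.sum_congr rfl fun k _ => by ring
        simp only [Matrix.of_apply, hfun]
        have hint1 : IntervalIntegrable
            (fun τ => (u τ ^ (m + 1) * μ τ) * ((Q0 ^ (m + 2)) i j / (m + 1).factorial))
            MeasureTheory.volume 0 s :=
          (((hucont.pow _).mul hμ).mul continuous_const).intervalIntegrable 0 s
        have hint2 : IntervalIntegrable
            (fun τ => ∑ k, (μ τ * qit (m + 1) τ k) * (Q0 ^ (m + 1)) k j)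
            MeasureTheory.volume 0 s :=
          (continuous_finset_sum _ fun k _ => (hcomp k).mul continuous_const).intervalIntegrable 0 s
        rw [intervalIntegral.integral_add hint1 hint2,
          intervalIntegral.integral_mul_const, hkey (m + 1) s,
          intervalIntegral.integral_finset_sum
            (fun k _ => ((hcomp k).fun_mul continuous_const).intervalIntegrable 0 s)]
        simp only [intervalIntegral.integral_mul_const]
        have hfac : ((m + 2 : ℕ).factorial : ℝ) = ((m : ℝ) + 1 + 1) * (m + 1).factorial := by
          rw [Nat.factorial_succ]
          push_cast
          ring
        simp only [Matrix.add_apply, Matrix.smul_apply, smul_eq_mul, eqRows,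
          Matrix.mul_apply, Matrix.of_apply, Nat.add_sub_cancel, ← happ]
        rw [hfac]
        simp only [show m + 1 + 1 = m + 2 from rfl]
        have hf0 : ((m + 1).factorial : ℝ) ≠ 0 := Nat.cast_ne_zero.mpr (Nat.factorial_ne_zero _)
        have hm2 : ((m : ℝ) + 1 + 1) ≠ 0 := by positivity
        push_cast
        congr 1
        field_simp
  obtain ⟨hc, hs, hI⟩ := main n hn
  refine ⟨hI t, hs t, fun j => ∑ k, qit n t k * (Q0 ^ (n - 1)) k j, hvm (n - 1) _ (hs t), ?_⟩
  exact heq_mul _ _
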